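/- (Theorem 1, case 2.) Suppose l < i, l < j, i ≤ l + D, and i + B < u (i.e., i ≤ min(D + l, u − B − 1): the lower bound l is reachable but the upper bound u is not). Then the cardinality of 𝕊_{ij}^B(l,u) equals C(K, B) − C(K, B_l), where B_l = B + l − j. -/

import Mathlib

open Finset

section BridgeAux

variable {n : ℕ} {l : ℤ}

/-- The set of upward-step positions of a path. -/
def upSet {n : ℕ} (ω : Fin (n+1) → ℤ) : Finset (Fin n) :=
  univ.filter (fun k => ω k.succ = ω k.castSucc + 1)

lemma filter_lt_succ_card {n : ℕ} (S : Finset (Fin n)) (k : Fin n) :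
    (S.filter fun t : Fin n => (t:ℕ) < (k:ℕ)+1).card
      = (S.filter fun t : Fin n => (t:ℕ) < (k:ℕ)).card + (if k ∈ S then 1 else 0) := by
  classical
  have hpred : ∀ t : Fin n, ((t:ℕ) < (k:ℕ)+1) ↔ (((t:ℕ) < (k:ℕ)) ∨ t = k) := by
    intro t
    rw [Nat.lt_succ_iff_lt_or_eq, Fin.ext_iff]
  rw [show (S.filter fun t : Fin n => (t:ℕ) < (k:ℕ)+1)
      = S.filter fun t : Fin n => ((t:ℕ) < (k:ℕ)) ∨ t = k from filter_congr (fun t _ => by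
        simp [hpred t]), filter_or, card_union_of_disjoint, filter_eq']
  · split <;> simp
  · rw [disjoint_left]
    intro a ha hb
    simp only [mem_filter] at ha hb
    exact absurd ha.2 (by simp [hb.2])
    
lemma path_spec {n : ℕ} (ω : Fin (n+1) → ℤ)
    (hstep : ∀ k : Fin n, |ω k.succ - ω k.castSucc| = 1) (k : Fin (n+1)) :
    ω k = ω 0 + 2 * (((upSet ω).filter fun t : Fin n => (t:ℕ) < (k:ℕ)).card : ℤ) - (k:ℕ) := by
  induction k using Fin.induction with
  | zero => simp
  | succ k ih =>
    have hcard := filter_lt_succ_card (upSet ω) k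
    have habs := hstep k
    have hup : k ∈ upSet ω ↔ ω k.succ = ω k.castSucc + 1 := by simp [upSet]
    rw [Fin.coe_castSucc] at ih
    rw [Fin.val_succ, hcard]
    rcases (abs_eq (by norm_num : (0:ℤ) ≤ 1)).mp habs with h | h
    · have : k ∈ upSet ω := hup.mpr (by linarith)
      rw [if_pos this]
      push_cast
      linarith
    · have : k ∉ upSet ω := fun hc => by have := hup.mp hc; linarith
      rw [if_neg this]
      push_cast
      linarith

def pathOf (i : ℤ) (S : Finset (Fin n)) : Fin (n+1) → ℤ :=
  fun k => i + 2 * ((S.filter fun t : Fin n => (t:ℕ) < (k:ℕ)).card : ℤ) - (k:ℕ)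

lemma pathOf_zero (i : ℤ) (S : Finset (Fin n)) : pathOf i S 0 = i := by simp [pathOf]

lemma pathOf_step (i : ℤ) (S : Finset (Fin n)) (k : Fin n) :
    pathOf i S k.succ - pathOf i S k.castSucc = if k ∈ S then 1 else -1 := by
  simp only [pathOf, Fin.val_succ, Fin.coe_castSucc, filter_lt_succ_card S k]
  split <;> push_cast <;> ring

lemma pathOf_abs_step (i : ℤ) (S : Finset (Fin n)) (k : Fin n) :
    |pathOf i S k.succ - pathOf i S k.castSucc| = 1 := by
  rw [pathOf_step]; split <;> norm_num

lemma upSet_pathOf (i : ℤ) (S : Finset (Fin n)) : upSet (pathOf i S) = S := by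
  ext k
  simp only [upSet, mem_filter, mem_univ, true_and]
  constructor
  · intro h
    have := pathOf_step i S k
    by_contra hk
    rw [if_neg hk] at this
    omega
  · intro h
    have := pathOf_step i S k
    rw [if_pos h] at this
    omega

lemma pathOf_upSet (ω : Fin (n+1) → ℤ) (hstep : ∀ k : Fin n, |ω k.succ - ω k.castSucc| = 1) :
    pathOf (ω 0) (upSet ω) = ω := by
  funext k
  rw [pathOf, ← path_spec ω hstep k]

lemma pathOf_injective (i : ℤ) : Function.Injective (pathOf (n := n) i) := by
  intro S T h
  rw [← upSet_pathOf i S, h, upSet_pathOf]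

/-- Unconstrained bridges with given endpoints and up-count. -/
def Bridges (i j : ℤ) (n b : ℕ) : Set (Fin (n+1) → ℤ) :=
  {ω | ω 0 = i ∧ ω (Fin.last n) = j ∧
    (∀ k : Fin n, |ω k.succ - ω k.castSucc| = 1) ∧
    (Finset.univ.filter (fun k : Fin n => ω k.succ = ω k.castSucc + 1)).card = b}

lemma upSet_card_spec (ω : Fin (n+1) → ℤ) (hstep : ∀ k : Fin n, |ω k.succ - ω k.castSucc| = 1) :
    (ω (Fin.last n) : ℤ) = ω 0 + 2 * ((upSet ω).card : ℤ) - n := by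
  have h := path_spec ω hstep (Fin.last n)
  have : (upSet ω).filter (fun t : Fin n => (t:ℕ) < ((Fin.last n : Fin (n+1)):ℕ)) = upSet ω := by
    apply filter_true_of_mem
    intro t _
    simpa using t.isLt
  rw [this] at h
  simpa using h

lemma bridges_eq_image (i j : ℤ) (b : ℕ) (hj : j = i + 2*(b:ℤ) - n) :
    Bridges i j n b = pathOf i '' {S : Finset (Fin n) | S.card = b} := by
  ext ω
  constructor
  · rintro ⟨h0, hlast, hstep, hcount⟩
    refine ⟨upSet ω, ?_, by rw [← h0, pathOf_upSet ω hstep]⟩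
    exact hcount
  · rintro ⟨S, hS, rfl⟩
    refine ⟨pathOf_zero i S, ?_, pathOf_abs_step i S, ?_⟩
    · have h := upSet_card_spec (pathOf i S) (pathOf_abs_step i S)
      rw [upSet_pathOf, pathOf_zero, hS] at h
      rw [h, hj]
    · have h2 : (upSet (pathOf i S)).card = b := by rw [upSet_pathOf]; exact hS
      simpa [upSet] using h2
      
lemma bridges_finite (i j : ℤ) (b : ℕ) (hj : j = i + 2*(b:ℤ) - n) :
    (Bridges i j n b).Finite := by
  rw [bridges_eq_image i j b hj]
  exact (Set.toFinite _).image _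

lemma ncard_bridges (i j : ℤ) (b : ℕ) (hj : j = i + 2*(b:ℤ) - n) :
    (Bridges i j n b).ncard = Nat.choose n b := by
  rw [bridges_eq_image i j b hj,
    Set.ncard_image_of_injective _ (pathOf_injective i)]
  have : {S : Finset (Fin n) | S.card = b} = ↑(univ.powersetCard b : Finset (Finset (Fin n))) := by
    ext S; simp [mem_powersetCard]
  rw [this, Set.ncard_coe_finset, card_powersetCard, card_univ, Fintype.card_fin]


open scoped Classical in
noncomputable def reflAt (l : ℤ) (ω : Fin (n+1) → ℤ) : Fin (n+1) → ℤ :=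
  fun k => if ∃ m ≤ k, ω m ≤ l then 2*l - ω k else ω k

lemma exists_eq_of_hit {ω : Fin (n+1) → ℤ}
    (h0 : l < ω 0) (hstep : ∀ k : Fin n, |ω k.succ - ω k.castSucc| = 1)
    (k : Fin (n+1)) (hk : ∃ m ≤ k, ω m ≤ l) : ∃ m ≤ k, ω m = l := by
  induction k using Fin.induction with
  | zero =>
    obtain ⟨m, hm, hml⟩ := hk
    rw [Fin.le_zero_iff] at hm
    subst hm
    exact absurd hml (by linarith)
  | succ k ih =>
    by_cases hc : ∃ m ≤ k.castSucc, ω m ≤ l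
    · obtain ⟨m, hm, hml⟩ := ih hc
      exact ⟨m, hm.trans (Fin.castSucc_lt_succ : k.castSucc < k.succ).le, hml⟩
    · push_neg at hc
      obtain ⟨m, hm, hml⟩ := hk
      have hmk : m = k.succ := by
        by_contra hne
        have h1 : (m:ℕ) ≤ (k:ℕ) + 1 := by simpa [Fin.le_def] using hm
        have h2 : (m:ℕ) ≠ (k:ℕ) + 1 := fun h => hne (Fin.ext (by simpa using h))
        exact absurd hml (not_le.mpr (hc m (by simp [Fin.le_def]; omega)))
      subst hmk
      have hcast : l < ω k.castSucc := hc k.castSucc le_rfl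
      have habs := hstep k
      refine ⟨k.succ, le_rfl, ?_⟩
      rcases (abs_eq (by norm_num : (0:ℤ) ≤ 1)).mp habs with h | h <;> linarith

lemma crossing {ω : Fin (n+1) → ℤ}
    (hstep : ∀ k : Fin n, |ω k.succ - ω k.castSucc| = 1) {k : Fin n}
    (hc : ¬ ∃ m ≤ k.castSucc, ω m ≤ l) (hs : ∃ m ≤ k.succ, ω m ≤ l) :
    ω k.castSucc = l + 1 ∧ ω k.succ = l := by
  push_neg at hc
  obtain ⟨m, hm, hml⟩ := hs
  have hmk : m = k.succ := by
    by_contra hne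
    have h1 : (m:ℕ) ≤ (k:ℕ) + 1 := by simpa [Fin.le_def] using hm
    have h2 : (m:ℕ) ≠ (k:ℕ) + 1 := fun h => hne (Fin.ext (by simpa using h))
    exact absurd hml (not_le.mpr (hc m (by simp [Fin.le_def]; omega)))
  subst hmk
  have hcast : l < ω k.castSucc := hc k.castSucc le_rfl
  have habs := hstep k
  rcases (abs_eq (by norm_num : (0:ℤ) ≤ 1)).mp habs with h | h <;> constructor <;> linarith

lemma reflAt_zero {ω : Fin (n+1) → ℤ} (h0 : l < ω 0) : reflAt l ω 0 = ω 0 := by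
  rw [reflAt, if_neg]
  rintro ⟨m, hm, hml⟩
  rw [Fin.le_zero_iff] at hm
  subst hm
  linarith

lemma reflAt_step {ω : Fin (n+1) → ℤ}
    (hstep : ∀ k : Fin n, |ω k.succ - ω k.castSucc| = 1) (k : Fin n) :
    |reflAt l ω k.succ - reflAt l ω k.castSucc| = 1 := by
  by_cases hc : ∃ m ≤ k.castSucc, ω m ≤ l
  · have hs : ∃ m ≤ k.succ, ω m ≤ l := by
      obtain ⟨m, hm, hml⟩ := hc
      exact ⟨m, hm.trans (Fin.castSucc_lt_succ : k.castSucc < k.succ).le, hml⟩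
    simp only [reflAt]
    rw [if_pos hs, if_pos hc]
    rw [show 2*l - ω k.succ - (2*l - ω k.castSucc) = -(ω k.succ - ω k.castSucc) by ring, abs_neg]
    exact hstep k
  · by_cases hs : ∃ m ≤ k.succ, ω m ≤ l
    · obtain ⟨h1, h2⟩ := crossing hstep hc hs
      simp only [reflAt]
      rw [if_pos hs, if_neg hc, h1, h2]
      rw [show 2*l - l - (l+1) = -1 by ring]
      norm_num
    · simp only [reflAt]
      rw [if_neg hs, if_neg hc]
      exact hstep k

lemma reflAt_last {ω : Fin (n+1) → ℤ} (h : ∃ k, ω k ≤ l) :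
    reflAt l ω (Fin.last n) = 2*l - ω (Fin.last n) := by
  obtain ⟨k, hk⟩ := h
  rw [reflAt, if_pos ⟨k, Fin.le_last k, hk⟩]

lemma reflAt_hits {ω : Fin (n+1) → ℤ}
    (h0 : l < ω 0) (hstep : ∀ k : Fin n, |ω k.succ - ω k.castSucc| = 1)
    (h : ∃ k, ω k ≤ l) : ∃ k, reflAt l ω k ≤ l := by
  obtain ⟨k, hk⟩ := h
  obtain ⟨m, hm, hml⟩ := exists_eq_of_hit h0 hstep (Fin.last n) ⟨k, Fin.le_last k, hk⟩
  refine ⟨m, ?_⟩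
  rw [reflAt, if_pos ⟨m, le_rfl, hml.le⟩, hml]
  linarith

lemma reflAt_flag {ω : Fin (n+1) → ℤ}
    (h0 : l < ω 0) (hstep : ∀ k : Fin n, |ω k.succ - ω k.castSucc| = 1) (k : Fin (n+1)) :
    (∃ m ≤ k, reflAt l ω m ≤ l) ↔ (∃ m ≤ k, ω m ≤ l) := by
  constructor
  · rintro ⟨m, hm, hml⟩
    by_contra hc
    push_neg at hc
    have : reflAt l ω m = ω m := by
      rw [reflAt, if_neg]
      rintro ⟨m', hm', hml'⟩
      exact absurd hml' (not_le.mpr (hc m' (hm'.trans hm)))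
    rw [this] at hml
    exact absurd hml (not_le.mpr (hc m hm))
  · intro h
    obtain ⟨m, hm, hml⟩ := exists_eq_of_hit h0 hstep k h
    refine ⟨m, hm, ?_⟩
    rw [reflAt, if_pos ⟨m, le_rfl, hml.le⟩, hml]
    linarith

lemma reflAt_involutive {ω : Fin (n+1) → ℤ}
    (h0 : l < ω 0) (hstep : ∀ k : Fin n, |ω k.succ - ω k.castSucc| = 1) :
    reflAt l (reflAt l ω) = ω := by
  funext k
  by_cases hc : ∃ m ≤ k, ω m ≤ l
  · rw [reflAt, if_pos ((reflAt_flag h0 hstep k).mpr hc)]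
    rw [reflAt, if_pos hc]
    ring
  · rw [reflAt]
    rw [if_neg (fun h => hc ((reflAt_flag h0 hstep k).mp h))]
    rw [reflAt, if_neg hc]


/-- The up-step count of a ±1-step path is determined by its endpoints. -/
lemma count_eq_of_endpoints {ω : Fin (n+1) → ℤ} {b : ℕ}
    (hstep : ∀ k : Fin n, |ω k.succ - ω k.castSucc| = 1)
    (hb : ω (Fin.last n) = ω 0 + 2*(b:ℤ) - n) :
    (Finset.univ.filter (fun k : Fin n => ω k.succ = ω k.castSucc + 1)).card = b := by
  have h := upSet_card_spec ω hstep
  rw [hb] at h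
  have : ((upSet ω).card : ℤ) = b := by linarith
  have h2 : (upSet ω).card = b := by exact_mod_cast this
  simpa [upSet] using h2

lemma refl_mapsTo {i j : ℤ} {b bl : ℕ} (hli : l < i)
    (hbl : 2*l - j = i + 2*(bl:ℤ) - n) :
    Set.MapsTo (reflAt l) (Bridges i j n b ∩ {ω | ∃ k, ω k ≤ l}) (Bridges i (2*l-j) n bl) := by
  rintro ω ⟨⟨h0, hlast, hstep, _⟩, hhit⟩
  have hl0 : l < ω 0 := by rw [h0]; exact hli
  refine ⟨by rw [reflAt_zero hl0, h0], by rw [reflAt_last hhit, hlast], reflAt_step hstep, ?_⟩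
  apply count_eq_of_endpoints (reflAt_step hstep)
  rw [reflAt_last hhit, hlast, reflAt_zero hl0, h0, hbl]

lemma refl_mapsTo' {i j : ℤ} {b bl : ℕ} (hli : l < i) (hlj : l < j)
    (hb : j = i + 2*(b:ℤ) - n) :
    Set.MapsTo (reflAt l) (Bridges i (2*l-j) n bl) (Bridges i j n b ∩ {ω | ∃ k, ω k ≤ l}) := by
  rintro ω ⟨h0, hlast, hstep, _⟩
  have hl0 : l < ω 0 := by rw [h0]; exact hli
  have hhit : ∃ k, ω k ≤ l := ⟨Fin.last n, by rw [hlast]; linarith⟩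
  refine ⟨⟨by rw [reflAt_zero hl0, h0],
    by rw [reflAt_last hhit, hlast]; ring, reflAt_step hstep, ?_⟩, reflAt_hits hl0 hstep hhit⟩
  apply count_eq_of_endpoints (reflAt_step hstep)
  rw [reflAt_last hhit, hlast, reflAt_zero hl0, h0]
  rw [hb]; ring

lemma refl_bijOn {i j : ℤ} {b bl : ℕ} (hli : l < i) (hlj : l < j)
    (hb : j = i + 2*(b:ℤ) - n) (hbl : 2*l - j = i + 2*(bl:ℤ) - n) :
    Set.BijOn (reflAt l) (Bridges i j n b ∩ {ω | ∃ k, ω k ≤ l}) (Bridges i (2*l-j) n bl) := by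
  refine Set.InvOn.bijOn ⟨?_, ?_⟩ (refl_mapsTo hli hbl) (refl_mapsTo' hli hlj hb)
  · rintro ω ⟨⟨h0, _, hstep, _⟩, _⟩
    exact reflAt_involutive (by rw [h0]; exact hli) hstep
  · rintro ω ⟨h0, _, hstep, _⟩
    exact reflAt_involutive (by rw [h0]; exact hli) hstep

/-- Paths with `b` up-steps never exceed start + b. -/
lemma path_le {ω : Fin (n+1) → ℤ} {b : ℕ}
    (hstep : ∀ k : Fin n, |ω k.succ - ω k.castSucc| = 1)
    (hcount : (Finset.univ.filter (fun k : Fin n => ω k.succ = ω k.castSucc + 1)).card = b)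
    (k : Fin (n+1)) : ω k ≤ ω 0 + b := by
  have h := path_spec ω hstep k
  set U := ((upSet ω).filter fun t : Fin n => (t:ℕ) < (k:ℕ)).card with hU
  have h1 : U ≤ b := by
    rw [← hcount]
    exact card_le_card (filter_subset _ _)
  have h2 : U ≤ (k:ℕ) := by
    rw [hU, ← Finset.card_range (k:ℕ)]
    apply card_le_card_of_injOn (fun t : Fin n => (t:ℕ))
    · intro t ht
      simp only [mem_coe, mem_filter] at ht
      simpa using ht.2
    · intro a _ c _ hac
      exact Fin.ext hac
  have h1' : (U:ℤ) ≤ b := by exact_mod_cast h1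
  have h2' : (U:ℤ) ≤ (k:ℕ) := by exact_mod_cast h2
  linarith


end BridgeAux

/-- An integer grid bridge from `i` to `j` with `B` upward jumps and `D` downward
jumps. -/
def IsBridge (i j : ℤ) (B D : ℕ) (ω : Fin (B + D + 1) → ℤ) : Prop :=
  ω 0 = i ∧ ω (Fin.last (B + D)) = j ∧
    (∀ k : Fin (B + D), |ω k.succ - ω k.castSucc| = 1) ∧
    (Finset.univ.filter (fun k : Fin (B + D) => ω k.succ = ω k.castSucc + 1)).card = B

/-- `𝕊_{ij}^B(l,u)`: bridges staying strictly between `l` and `u`. -/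
def BoundedBridges (i j l u : ℤ) (B D : ℕ) : Set (Fin (B + D + 1) → ℤ) :=
  {ω | IsBridge i j B D ω ∧ ∀ k : Fin (B + D + 1), l < ω k ∧ ω k < u}

/-- Theorem 1, case 2: if `l < i`, `l < j`, `i ≤ l + D` and `i + B < u` (lower bound
reachable, upper bound not), then `card 𝕊_{ij}^B(l,u) = C(K, B) - C(K, B_l)` with
`B_l = B + l - j`. -/
theorem bounded_bridge_count_case2 (i j l u : ℤ) (B D : ℕ) (hj : j = i + B - D)
    (hli : l < i) (hlj : l < j) (hl : i ≤ l + D) (hu : i + B < u) :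
    (BoundedBridges i j l u B D).ncard
      = Nat.choose (B + D) B - Nat.choose (B + D) (((B : ℤ) + l - j).toNat) := by
  set n := B + D with hn
  set bl := ((B : ℤ) + l - j).toNat with hbldef
  have hblz : (bl : ℤ) = (B:ℤ) + l - j := Int.toNat_of_nonneg (by omega)
  have hb : j = i + 2*(B:ℤ) - n := by push_cast [hn]; omega
  have hbl : 2*l - j = i + 2*(bl:ℤ) - n := by rw [hblz]; push_cast [hn]; omega
  -- the bounded bridges are exactly the bridges avoiding l
  have hset : BoundedBridges i j l u B D
      = Bridges i j n B \ (Bridges i j n B ∩ {ω | ∃ k, ω k ≤ l}) := by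
    rw [Set.diff_self_inter]
    ext ω
    simp only [BoundedBridges, IsBridge, Bridges, Set.mem_setOf_eq, Set.mem_diff]
    constructor
    · rintro ⟨hbr, hbd⟩
      exact ⟨hbr, fun ⟨k, hk⟩ => absurd hk (not_le.mpr (hbd k).1)⟩
    · rintro ⟨hbr, hhit⟩
      have hhit : ∀ k, l < ω k := fun k => not_le.mp (fun h => hhit ⟨k, h⟩)
      refine ⟨hbr, fun k => ⟨hhit k, ?_⟩⟩
      have := path_le hbr.2.2.1 hbr.2.2.2 k
      rw [hbr.1] at this
      linarith
  have hfin : (Bridges i j n B).Finite := bridges_finite i j B hb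
  have hsub : Bridges i j n B ∩ {ω | ∃ k, ω k ≤ l} ⊆ Bridges i j n B := Set.inter_subset_left
  have hbad : (Bridges i j n B ∩ {ω | ∃ k, ω k ≤ l}).ncard = Nat.choose n bl := by
    have hbij := refl_bijOn (n := n) hli hlj hb hbl
    rw [← Set.ncard_image_of_injOn hbij.injOn, hbij.image_eq,
      ncard_bridges i (2*l-j) bl hbl]
  rw [hset, Set.ncard_diff hsub (hfin.subset hsub), ncard_bridges i j B hb, hbad]
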